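/- Let s > 1 and let f ∈ L²(ℝ², ⟨x⟩^{2s} m(dx)). Then for every x ∈ ℝ² the integral ∫_{ℝ²} |log|x−y|| · |f(y)| m(dy) is finite, and the function x ↦ ∫_{ℝ²} log(1/|x−y|) f(y) m(dy) (the logarithmic potential of f, up to the factor 1/2π) is continuous on ℝ². -/

import Mathlib

open MeasureTheory

open Metric Filter
open scoped ENNReal NNReal Topology

noncomputable section

abbrev E2 := EuclideanSpace ℝ (Fin 2)

def k1 (t : E2) : ℝ := max 0 (-Real.log ‖t‖)
def k2 (t : E2) : ℝ := Real.log (max 1 ‖t‖)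
def k1n (n : ℕ) (t : E2) : ℝ := -Real.log (min 1 (max ‖t‖ (Real.exp (-(n : ℝ)))))

lemma k1_nonneg (t : E2) : 0 ≤ k1 t := le_max_left _ _
lemma k2_nonneg (t : E2) : 0 ≤ k2 t := Real.log_nonneg (le_max_left _ _)

lemma k1_sub_k2 (t : E2) : Real.log (1 / ‖t‖) = k1 t - k2 t := by
  rw [one_div, Real.log_inv, k1, k2]
  rcases le_or_gt 1 ‖t‖ with h | h
  · rw [max_eq_right h, max_eq_left (neg_nonpos.2 (Real.log_nonneg h))]; ring
  · rw [max_eq_left h.le, Real.log_one,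
      max_eq_right (neg_nonneg.2 (Real.log_nonpos (norm_nonneg t) h.le))]; ring

lemma abs_log_eq (t : E2) : |Real.log ‖t‖| = k1 t + k2 t := by
  rw [k1, k2]
  rcases le_or_gt 1 ‖t‖ with h | h
  · rw [max_eq_right h, max_eq_left (neg_nonpos.2 (Real.log_nonneg h)),
      abs_of_nonneg (Real.log_nonneg h)]; ring
  · rw [max_eq_left h.le, Real.log_one,
      max_eq_right (neg_nonneg.2 (Real.log_nonpos (norm_nonneg t) h.le)),
      abs_of_nonpos (Real.log_nonpos (norm_nonneg t) h.le)]; ring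

lemma k1_comm (x y : E2) : k1 (x - y) = k1 (y - x) := by rw [k1, k1, norm_sub_rev]
lemma k2_comm (x y : E2) : k2 (x - y) = k2 (y - x) := by rw [k2, k2, norm_sub_rev]
lemma k1n_comm (n : ℕ) (x y : E2) : k1n n (x - y) = k1n n (y - x) := by
  rw [k1n, k1n, norm_sub_rev]

lemma k1_meas : Measurable k1 :=
  measurable_const.max (Real.measurable_log.comp measurable_norm).neg

lemma k1n_cont (n : ℕ) : Continuous (k1n n) := by
  have h : ∀ t : E2, min 1 (max ‖t‖ (Real.exp (-(n : ℝ)))) ≠ 0 := fun t =>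
    ne_of_gt (lt_min one_pos (lt_of_lt_of_le (Real.exp_pos _) (le_max_right _ _)))
  exact ((continuous_const.min (continuous_norm.max continuous_const)).log h).neg

lemma k2_cont : Continuous k2 := by
  have h : ∀ t : E2, max 1 ‖t‖ ≠ 0 := fun t => ne_of_gt (lt_of_lt_of_le one_pos (le_max_left _ _))
  exact (continuous_const.max continuous_norm).log h

lemma k1n_nonneg (n : ℕ) (t : E2) : 0 ≤ k1n n t := by
  rw [k1n, neg_nonneg]
  exact Real.log_nonpos (le_min zero_le_one (le_max_of_le_right (Real.exp_pos _).le)) (min_le_left _ _)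

lemma k1n_le (n : ℕ) (t : E2) : k1n n t ≤ n := by
  rw [k1n, neg_le]
  calc (-(n:ℝ)) = Real.log (Real.exp (-(n:ℝ))) := (Real.log_exp _).symm
    _ ≤ Real.log (min 1 (max ‖t‖ (Real.exp (-(n : ℝ))))) := by
        apply Real.log_le_log (Real.exp_pos _)
        exact le_min (Real.exp_le_one_iff.2 (by simp)) (le_max_right _ _)

lemma k1n_eq (n : ℕ) {t : E2} (ht : t ≠ 0) : k1n n t = min (k1 t) n := by
  have hr : (0:ℝ) < ‖t‖ := norm_pos_iff.2 ht
  rw [k1n, k1]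
  rcases le_or_gt 1 ‖t‖ with h | h
  · rw [max_eq_left (le_trans (Real.exp_le_one_iff.2 (by simp)) h), min_eq_left h, Real.log_one,
      max_eq_left (neg_nonpos.2 (Real.log_nonneg h)), min_eq_left (by positivity)]
    ring
  · rcases le_or_gt (Real.exp (-(n:ℝ))) ‖t‖ with h2 | h2
    · rw [max_eq_left h2, min_eq_right h.le,
        max_eq_right (neg_nonneg.2 (Real.log_nonpos hr.le h.le)),
        min_eq_left (by
          rw [neg_le]
          calc (-(n:ℝ)) = Real.log (Real.exp (-(n:ℝ))) := (Real.log_exp _).symm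
            _ ≤ Real.log ‖t‖ := Real.log_le_log (Real.exp_pos _) h2)]
    · rw [max_eq_right h2.le, min_eq_right (Real.exp_le_one_iff.2 (by simp)), Real.log_exp,
        max_eq_right (neg_nonneg.2 (Real.log_nonpos hr.le h.le)),
        min_eq_right (by
          rw [le_neg]
          calc Real.log ‖t‖ ≤ Real.log (Real.exp (-(n:ℝ))) := Real.log_le_log hr h2.le
            _ = -(n:ℝ) := Real.log_exp _), neg_neg]

lemma k1n_eq_zero (n : ℕ) {t : E2} (ht : 1 ≤ ‖t‖) : k1n n t = 0 := by
  rw [k1n, max_eq_left (le_trans (Real.exp_le_one_iff.2 (by simp)) ht), min_eq_left ht,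
    Real.log_one, neg_zero]

lemma ofReal_sq {c : ℝ} (hc : 0 ≤ c) : ENNReal.ofReal c ^ (2:ℝ) = ENNReal.ofReal (c ^ 2) := by
  rw [ENNReal.ofReal_rpow_of_nonneg hc (by norm_num), ← Real.rpow_natCast c 2]
  norm_num

lemma hold2 {μ : Measure E2} {a b : E2 → ℝ} (ha : AEMeasurable a μ) (hb : AEMeasurable b μ)
    (h0a : ∀ y, 0 ≤ a y) (h0b : ∀ y, 0 ≤ b y) :
    ∫⁻ y, ENNReal.ofReal (a y * b y) ∂μ ≤
      (∫⁻ y, ENNReal.ofReal (a y ^ 2) ∂μ) ^ ((1:ℝ)/2) *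
      (∫⁻ y, ENNReal.ofReal (b y ^ 2) ∂μ) ^ ((1:ℝ)/2) := by
  have hpq : (2:ℝ).HolderConjugate 2 := Real.HolderConjugate.two_two
  have H := ENNReal.lintegral_mul_le_Lp_mul_Lq μ hpq
    (f := fun y => ENNReal.ofReal (a y)) (g := fun y => ENNReal.ofReal (b y))
    ha.ennreal_ofReal hb.ennreal_ofReal
  simp only [Pi.mul_apply, ← ENNReal.ofReal_mul (h0a _)] at H
  calc ∫⁻ y, ENNReal.ofReal (a y * b y) ∂μ
      ≤ (∫⁻ y, ENNReal.ofReal (a y) ^ (2:ℝ) ∂μ) ^ ((1:ℝ)/2) *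
        (∫⁻ y, ENNReal.ofReal (b y) ^ (2:ℝ) ∂μ) ^ ((1:ℝ)/2) := H
    _ = _ := by
        congr 2
        · exact lintegral_congr fun y => ofReal_sq (h0a y)
        · exact lintegral_congr fun y => ofReal_sq (h0b y)

lemma jap {p : ℝ} (hp : 2 < p) :
    ∫⁻ y : E2, ENNReal.ofReal ((1 + ‖y‖ ^ 2) ^ (-p/2)) < ⊤ := by
  have h : ((Module.finrank ℝ E2 : ℝ)) < p := by
    rw [finrank_euclideanSpace_fin]; exact_mod_cast hp
  exact (integrable_rpow_neg_one_add_norm_sq (E := E2) (μ := volume) h).lintegral_lt_top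

lemma weightedCS {s : ℝ} (hs : 0 < s) {f w : E2 → ℝ} (hf : Measurable f) (hw : Measurable w)
    (h0 : ∀ y, 0 ≤ w y) :
    ∫⁻ y, ENNReal.ofReal (w y * |f y|) ≤
      (∫⁻ y, ENNReal.ofReal (w y ^ 2 * (1 + ‖y‖ ^ 2) ^ (-s))) ^ ((1:ℝ)/2) *
      (∫⁻ y, ENNReal.ofReal ((1 + ‖y‖ ^ 2) ^ s * f y ^ 2)) ^ ((1:ℝ)/2) := by
  have hpos : ∀ y : E2, (0:ℝ) < 1 + ‖y‖ ^ 2 := fun y => by positivity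
  have key : ∀ y : E2, w y * |f y| =
      (w y * (1 + ‖y‖ ^ 2) ^ (-s/2)) * ((1 + ‖y‖ ^ 2) ^ (s/2) * |f y|) := by
    intro y
    have : (1 + ‖y‖ ^ 2) ^ (-s/2) * (1 + ‖y‖ ^ 2) ^ (s/2) = 1 := by
      rw [← Real.rpow_add (hpos y), neg_div, neg_add_cancel, Real.rpow_zero]
    calc w y * |f y| = w y * ((1 + ‖y‖ ^ 2) ^ (-s/2) * (1 + ‖y‖ ^ 2) ^ (s/2)) * |f y| := by
          rw [this]; ring
      _ = _ := by ring
  have sq1 : ∀ y : E2, (w y * (1 + ‖y‖ ^ 2) ^ (-s/2)) ^ 2 = w y ^ 2 * (1 + ‖y‖ ^ 2) ^ (-s) := by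
    intro y
    rw [mul_pow, ← Real.rpow_natCast ((1 + ‖y‖ ^ 2) ^ (-s/2)) 2, ← Real.rpow_mul (hpos y).le]
    norm_num
  have sq2 : ∀ y : E2, ((1 + ‖y‖ ^ 2) ^ (s/2) * |f y|) ^ 2 = (1 + ‖y‖ ^ 2) ^ s * f y ^ 2 := by
    intro y
    rw [mul_pow, ← Real.rpow_natCast ((1 + ‖y‖ ^ 2) ^ (s/2)) 2, ← Real.rpow_mul (hpos y).le,
      sq_abs]
    norm_num
  have H := hold2 (μ := volume)
    (a := fun y => w y * (1 + ‖y‖ ^ 2) ^ (-s/2)) (b := fun y => (1 + ‖y‖ ^ 2) ^ (s/2) * |f y|)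
    (by fun_prop) (by fun_prop)
    (fun y => mul_nonneg (h0 y) (Real.rpow_nonneg (hpos y).le _))
    (fun y => mul_nonneg (Real.rpow_nonneg (hpos y).le _) (abs_nonneg _))
  simp only [sq1, sq2, ← key] at H
  exact H

lemma cube_le_exp {x : ℝ} (hx : 0 ≤ x) : (x / 3) ^ 3 ≤ Real.exp x := by
  have h1 : x / 3 ≤ Real.exp (x / 3) :=
    le_trans (by linarith) (Real.add_one_le_exp (x / 3))
  calc (x / 3) ^ 3 ≤ Real.exp (x / 3) ^ 3 := by
        apply pow_le_pow_left₀ (by positivity) h1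
    _ = Real.exp x := by
        have h3 : ((3:ℕ):ℝ) * (x / 3) = x := by push_cast; ring
        rw [← Real.exp_nat_mul, h3]

lemma sqrt_cube {l : ℝ} (hl : 0 ≤ l) : Real.sqrt l ^ 3 = l ^ ((3:ℝ)/2) := by
  rw [Real.sqrt_eq_rpow, ← Real.rpow_natCast (l ^ ((1:ℝ)/2)) 3, ← Real.rpow_mul hl]
  norm_num

lemma exp_bound {l : ℝ} (hl : 1 ≤ l) : Real.exp (-Real.sqrt l) ^ 2 ≤ 27 * l ^ (-(3:ℝ)/2) := by
  have hl0 : (0:ℝ) ≤ l := by linarith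
  have h32 : (0:ℝ) < l ^ ((3:ℝ)/2) := Real.rpow_pos_of_pos (by linarith) _
  have key : (8/27) * l ^ ((3:ℝ)/2) ≤ Real.exp (2 * Real.sqrt l) := by
    calc (8/27) * l ^ ((3:ℝ)/2) = (2 * Real.sqrt l / 3) ^ 3 := by
          rw [div_pow, mul_pow, ← sqrt_cube hl0]; ring
      _ ≤ Real.exp (2 * Real.sqrt l) := cube_le_exp (by positivity)
  have h2 : Real.exp (-Real.sqrt l) ^ 2 = (Real.exp (2 * Real.sqrt l))⁻¹ := by
    have h4 : ((2:ℕ):ℝ) * (-Real.sqrt l) = -(2 * Real.sqrt l) := by push_cast; ring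
    rw [← Real.exp_nat_mul, h4, Real.exp_neg]
  have h5 : l ^ (-(3:ℝ)/2) = (l ^ ((3:ℝ)/2))⁻¹ := by
    rw [neg_div, Real.rpow_neg hl0]
  rw [h2, h5]
  have h6 : (Real.exp (2 * Real.sqrt l))⁻¹ ≤ ((8/27) * l ^ ((3:ℝ)/2))⁻¹ := by
    apply inv_anti₀ (by positivity) key
  calc (Real.exp (2 * Real.sqrt l))⁻¹ ≤ ((8/27) * l ^ ((3:ℝ)/2))⁻¹ := h6
    _ = (27/8) * (l ^ ((3:ℝ)/2))⁻¹ := by rw [mul_inv]; ring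
    _ ≤ 27 * (l ^ ((3:ℝ)/2))⁻¹ := by
        have : (0:ℝ) ≤ (l ^ ((3:ℝ)/2))⁻¹ := by positivity
        nlinarith

lemma I1 : ∫⁻ t : E2, ENNReal.ofReal (k1 t ^ 2) < ⊤ := by
  rw [lintegral_eq_lintegral_meas_le volume (Eventually.of_forall fun t => sq_nonneg _)
    ((k1_meas.pow_const 2).aemeasurable)]
  set K := volume (Metric.ball (0:E2) 1) with hKdef
  have hK : K < ⊤ := measure_ball_lt_top
  have hsub : ∀ l : ℝ, 0 < l →
      volume {a : E2 | l ≤ k1 a ^ 2} ≤ ENNReal.ofReal (Real.exp (-Real.sqrt l) ^ 2) * K := by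
    intro l hl
    have : {a : E2 | l ≤ k1 a ^ 2} ⊆ closedBall 0 (Real.exp (-Real.sqrt l)) := by
      intro a ha
      simp only [Set.mem_setOf_eq] at ha
      rcases eq_or_ne a 0 with rfl | h0
      · simp [mem_closedBall, (Real.exp_pos _).le]
      have hk : Real.sqrt l ≤ k1 a := by
        have := Real.sqrt_le_sqrt ha
        rwa [Real.sqrt_sq (k1_nonneg a)] at this
      have hsl : 0 < Real.sqrt l := Real.sqrt_pos.2 hl
      have hlog : Real.log ‖a‖ ≤ -Real.sqrt l := by
        have : Real.sqrt l ≤ -Real.log ‖a‖ := by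
          rcases le_or_gt (Real.sqrt l) (-Real.log ‖a‖) with h | h
          · exact h
          · exfalso
            have : k1 a < Real.sqrt l := by
              rw [k1]; exact max_lt hsl h
            linarith
        linarith
      rw [mem_closedBall_zero_iff, ← Real.exp_log (norm_pos_iff.2 h0)]
      simpa using Real.exp_le_exp.2 hlog
    calc volume {a : E2 | l ≤ k1 a ^ 2} ≤ volume (closedBall 0 (Real.exp (-Real.sqrt l))) :=
          measure_mono this
      _ = ENNReal.ofReal (Real.exp (-Real.sqrt l) ^ Module.finrank ℝ E2) * K :=
          Measure.addHaar_closedBall volume 0 (Real.exp_pos _).le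
      _ = ENNReal.ofReal (Real.exp (-Real.sqrt l) ^ 2) * K := by
          rw [finrank_euclideanSpace_fin]
  calc ∫⁻ l in Set.Ioi (0:ℝ), volume {a : E2 | l ≤ k1 a ^ 2}
      ≤ ∫⁻ l in Set.Ioi (0:ℝ), ENNReal.ofReal (Real.exp (-Real.sqrt l) ^ 2) * K := by
        apply setLIntegral_mono' measurableSet_Ioi
        intro l hl
        exact hsub l hl
    _ = (∫⁻ l in Set.Ioi (0:ℝ), ENNReal.ofReal (Real.exp (-Real.sqrt l) ^ 2)) * K :=
        lintegral_mul_const' K _ hK.ne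
    _ < ⊤ := by
        apply ENNReal.mul_lt_top _ hK
        calc ∫⁻ l in Set.Ioi (0:ℝ), ENNReal.ofReal (Real.exp (-Real.sqrt l) ^ 2)
            ≤ ∫⁻ l in Set.Ioc (0:ℝ) 1 ∪ Set.Ioi 1, ENNReal.ofReal (Real.exp (-Real.sqrt l) ^ 2) :=
              lintegral_mono_set Set.Ioi_subset_Ioc_union_Ioi
          _ ≤ (∫⁻ l in Set.Ioc (0:ℝ) 1, ENNReal.ofReal (Real.exp (-Real.sqrt l) ^ 2)) +
              ∫⁻ l in Set.Ioi (1:ℝ), ENNReal.ofReal (Real.exp (-Real.sqrt l) ^ 2) :=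
              lintegral_union_le _ _ _
          _ < ⊤ := by
              apply ENNReal.add_lt_top.2
              constructor
              · calc ∫⁻ l in Set.Ioc (0:ℝ) 1, ENNReal.ofReal (Real.exp (-Real.sqrt l) ^ 2)
                    ≤ ∫⁻ _ in Set.Ioc (0:ℝ) 1, 1 := by
                      apply setLIntegral_mono' measurableSet_Ioc
                      intro l _
                      rw [show (1:ℝ≥0∞) = ENNReal.ofReal 1 by simp]
                      apply ENNReal.ofReal_le_ofReal
                      have : Real.exp (-Real.sqrt l) ≤ 1 :=
                        Real.exp_le_one_iff.2 (neg_nonpos.2 (Real.sqrt_nonneg _))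
                      nlinarith [Real.exp_pos (-Real.sqrt l)]
                  _ < ⊤ := by
                      rw [setLIntegral_one, Real.volume_Ioc]
                      exact ENNReal.ofReal_lt_top
              · calc ∫⁻ l in Set.Ioi (1:ℝ), ENNReal.ofReal (Real.exp (-Real.sqrt l) ^ 2)
                    ≤ ∫⁻ l in Set.Ioi (1:ℝ), ENNReal.ofReal (27 * l ^ (-(3:ℝ)/2)) := by
                      apply setLIntegral_mono' measurableSet_Ioi
                      intro l hl
                      exact ENNReal.ofReal_le_ofReal (exp_bound (le_of_lt hl))
                  _ < ⊤ := by
                      have : IntegrableOn (fun l : ℝ => 27 * l ^ (-(3:ℝ)/2)) (Set.Ioi 1) :=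
                        (integrableOn_Ioi_rpow_of_lt (by norm_num) one_pos).const_mul 27
                      exact this.lintegral_lt_top

lemma ae_ne_zero : ∀ᵐ t : E2, t ≠ 0 := by
  have h : volume ({0} : Set E2) = 0 := measure_singleton 0
  rw [ae_iff]
  convert h using 2
  ext t
  simp

lemma Dtend : Tendsto (fun n : ℕ => ∫⁻ t : E2, ENNReal.ofReal ((k1 t - k1n n t) ^ 2)) atTop
    (𝓝 0) := by
  have h0 := ae_ne_zero
  rw [show (0:ℝ≥0∞) = ∫⁻ _ : E2, (0:ℝ≥0∞) by simp]
  apply tendsto_lintegral_of_dominated_convergence (bound := fun t => ENNReal.ofReal (k1 t ^ 2))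
  · intro n
    exact ((k1_meas.sub (k1n_cont n).measurable).pow_const 2).ennreal_ofReal
  · intro n
    filter_upwards [h0] with t ht
    have he := k1n_eq n ht
    have h1 : 0 ≤ k1n n t := k1n_nonneg n t
    have h2 : k1n n t ≤ k1 t := by rw [he]; exact min_le_left _ _
    apply ENNReal.ofReal_le_ofReal
    nlinarith [k1_nonneg t]
  · exact I1.ne
  · filter_upwards [h0] with t ht
    have hev : ∀ᶠ n : ℕ in atTop, ENNReal.ofReal ((k1 t - k1n n t) ^ 2) = 0 := by
      filter_upwards [eventually_ge_atTop ⌈k1 t⌉₊] with n hn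
      have hle : k1 t ≤ (n : ℝ) := le_trans (Nat.le_ceil _) (by exact_mod_cast hn)
      rw [k1n_eq n ht, min_eq_left hle]
      simp
    exact Tendsto.congr' (hev.mono fun n h => h.symm) tendsto_const_nhds

lemma CS_kernel {f : E2 → ℝ} (hf : Measurable f) {g : E2 → ℝ} (hg : Measurable g)
    (hg0 : ∀ t, 0 ≤ g t) (hcomm : ∀ x y : E2, g (x - y) = g (y - x)) (x : E2) :
    ∫⁻ y, ENNReal.ofReal (g (x - y) * |f y|) ≤
      (∫⁻ t, ENNReal.ofReal (g t ^ 2)) ^ ((1:ℝ)/2) *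
      (∫⁻ y, ENNReal.ofReal (f y ^ 2)) ^ ((1:ℝ)/2) := by
  have H := hold2 (μ := volume) (a := fun y => g (x - y)) (b := fun y => |f y|)
    (by fun_prop) hf.abs.aemeasurable (fun y => hg0 _) (fun y => abs_nonneg _)
  have h1 : ∫⁻ y, ENNReal.ofReal (g (x - y) ^ 2) = ∫⁻ t, ENNReal.ofReal (g t ^ 2) := by
    simp only [hcomm x]
    exact lintegral_sub_right_eq_self (fun t => ENNReal.ofReal (g t ^ 2)) x
  have h2 : ∀ y : E2, |f y| ^ 2 = f y ^ 2 := fun y => sq_abs _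
  simp only [h1, h2] at H
  exact H

lemma log_le_rpow {e z : ℝ} (he : 0 < e) (hz : 1 ≤ z) : Real.log z ≤ e⁻¹ * z ^ e := by
  have hz0 : (0:ℝ) < z := by linarith
  have h1 : Real.log z = e⁻¹ * Real.log (z ^ e) := by
    rw [Real.log_rpow hz0]; field_simp
  rw [h1]
  have h2 : Real.log (z ^ e) ≤ z ^ e := by
    have := Real.log_le_sub_one_of_pos (Real.rpow_pos_of_pos hz0 e)
    linarith
  have h3 : (0:ℝ) ≤ e⁻¹ := (inv_pos.2 he).le
  nlinarith

lemma k2_dom (x0 : E2) {e : ℝ} (he : 0 < e) {x : E2} (hx : x ∈ closedBall x0 1) (y : E2) :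
    k2 (x - y) ≤ (e⁻¹ * (2 * (2 + ‖x0‖)) ^ e) * (1 + ‖y‖ ^ 2) ^ (e/2) := by
  set z := max 1 ‖x - y‖ with hzdef
  have hz1 : (1:ℝ) ≤ z := le_max_left _ _
  have step1 : k2 (x - y) ≤ e⁻¹ * z ^ e := log_le_rpow he hz1
  have hxx0 : ‖x - x0‖ ≤ 1 := by rwa [← dist_eq_norm, ← mem_closedBall]
  have hxy : ‖x - y‖ ≤ 1 + ‖x0‖ + ‖y‖ := by
    calc ‖x - y‖ = ‖(x - x0) + (x0 - y)‖ := by abel_nf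
      _ ≤ ‖x - x0‖ + ‖x0 - y‖ := norm_add_le _ _
      _ ≤ 1 + (‖x0‖ + ‖y‖) := add_le_add hxx0 (norm_sub_le _ _)
      _ = 1 + ‖x0‖ + ‖y‖ := by ring
  have h2' : (0:ℝ) < 1 + ‖y‖ ^ 2 := by positivity
  have hy2 : 1 + ‖y‖ ≤ 2 * (1 + ‖y‖ ^ 2) ^ ((1:ℝ)/2) := by
    have h3 : ((1 + ‖y‖ ^ 2) ^ ((1:ℝ)/2)) ^ 2 = 1 + ‖y‖ ^ 2 := by
      rw [← Real.rpow_natCast ((1 + ‖y‖ ^ 2) ^ ((1:ℝ)/2)) 2, ← Real.rpow_mul h2'.le]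
      norm_num
    nlinarith [Real.rpow_nonneg h2'.le ((1:ℝ)/2), norm_nonneg y, sq_nonneg (1 - ‖y‖)]
  have hzb : z ≤ 2 * (2 + ‖x0‖) * (1 + ‖y‖ ^ 2) ^ ((1:ℝ)/2) := by
    have hz2 : z ≤ (2 + ‖x0‖) * (1 + ‖y‖) := by
      apply max_le
      · nlinarith [norm_nonneg x0, norm_nonneg y]
      · calc ‖x - y‖ ≤ 1 + ‖x0‖ + ‖y‖ := hxy
          _ ≤ (2 + ‖x0‖) * (1 + ‖y‖) := by nlinarith [norm_nonneg x0, norm_nonneg y]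
    calc z ≤ (2 + ‖x0‖) * (1 + ‖y‖) := hz2
      _ ≤ (2 + ‖x0‖) * (2 * (1 + ‖y‖ ^ 2) ^ ((1:ℝ)/2)) := by
          apply mul_le_mul_of_nonneg_left hy2 (by positivity)
      _ = 2 * (2 + ‖x0‖) * (1 + ‖y‖ ^ 2) ^ ((1:ℝ)/2) := by ring
  have step2 : z ^ e ≤ (2 * (2 + ‖x0‖)) ^ e * (1 + ‖y‖ ^ 2) ^ (e/2) := by
    calc z ^ e ≤ (2 * (2 + ‖x0‖) * (1 + ‖y‖ ^ 2) ^ ((1:ℝ)/2)) ^ e :=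
          Real.rpow_le_rpow (by linarith) hzb he.le
      _ = (2 * (2 + ‖x0‖)) ^ e * ((1 + ‖y‖ ^ 2) ^ ((1:ℝ)/2)) ^ e :=
          Real.mul_rpow (by positivity) (by positivity)
      _ = (2 * (2 + ‖x0‖)) ^ e * (1 + ‖y‖ ^ 2) ^ (e/2) := by
          rw [← Real.rpow_mul h2'.le, show (1:ℝ)/2 * e = e/2 by ring]
  calc k2 (x - y) ≤ e⁻¹ * z ^ e := step1
    _ ≤ e⁻¹ * ((2 * (2 + ‖x0‖)) ^ e * (1 + ‖y‖ ^ 2) ^ (e/2)) :=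
        mul_le_mul_of_nonneg_left step2 (inv_pos.2 he).le
    _ = _ := by ring

lemma wfin {s : ℝ} (hs : 1 < s) {f : E2 → ℝ} (hf : Measurable f)
    (hf2 : ∫⁻ y, ENNReal.ofReal ((1 + ‖y‖ ^ 2) ^ s * f y ^ 2) < ⊤) (c : ℝ) (hc : 0 ≤ c) :
    ∫⁻ y, ENNReal.ofReal (c * (1 + ‖y‖ ^ 2) ^ ((s-1)/4) * |f y|) < ⊤ := by
  have hw : Measurable (fun y : E2 => c * (1 + ‖y‖ ^ 2) ^ ((s-1)/4)) := by fun_prop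
  have h0 : ∀ y : E2, 0 ≤ c * (1 + ‖y‖ ^ 2) ^ ((s-1)/4) := fun y => by positivity
  have H := weightedCS (lt_trans one_pos hs) hf hw h0
  have heq : ∀ y : E2, (c * (1 + ‖y‖ ^ 2) ^ ((s-1)/4)) ^ 2 * (1 + ‖y‖ ^ 2) ^ (-s) =
      c ^ 2 * (1 + ‖y‖ ^ 2) ^ (-(s+1)/2) := by
    intro y
    have h2 : (0:ℝ) < 1 + ‖y‖ ^ 2 := by positivity
    rw [mul_pow, ← Real.rpow_natCast ((1 + ‖y‖ ^ 2) ^ ((s-1)/4)) 2, ← Real.rpow_mul h2.le,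
      mul_assoc, ← Real.rpow_add h2, show (s-1)/4 * ((2:ℕ):ℝ) + -s = -(s+1)/2 by push_cast; ring]
  have hfin1 : ∫⁻ y : E2, ENNReal.ofReal ((c * (1 + ‖y‖ ^ 2) ^ ((s-1)/4)) ^ 2 *
      (1 + ‖y‖ ^ 2) ^ (-s)) < ⊤ := by
    simp only [heq]
    calc ∫⁻ y : E2, ENNReal.ofReal (c ^ 2 * (1 + ‖y‖ ^ 2) ^ (-(s+1)/2))
        = ∫⁻ y : E2, ENNReal.ofReal (c ^ 2) * ENNReal.ofReal ((1 + ‖y‖ ^ 2) ^ (-(s+1)/2)) := by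
          apply lintegral_congr fun y => ENNReal.ofReal_mul (sq_nonneg c)
      _ = ENNReal.ofReal (c ^ 2) * ∫⁻ y : E2, ENNReal.ofReal ((1 + ‖y‖ ^ 2) ^ (-(s+1)/2)) := by
          apply lintegral_const_mul
          fun_prop
      _ < ⊤ := ENNReal.mul_lt_top ENNReal.ofReal_lt_top (jap (by linarith))
  apply lt_of_le_of_lt H
  exact ENNReal.mul_lt_top
    (ENNReal.rpow_lt_top_of_nonneg (by norm_num) hfin1.ne)
    (ENNReal.rpow_lt_top_of_nonneg (by norm_num) hf2.ne)

lemma ind_int {f : E2 → ℝ} (hf : Measurable f)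
    (hF2 : ∫⁻ y : E2, ENNReal.ofReal (f y ^ 2) < ⊤) (c : ℝ) (hc : 0 ≤ c) (x0 : E2) (r : ℝ) :
    Integrable ((closedBall x0 r).indicator (fun y => c * |f y|)) := by
  constructor
  · exact ((hf.abs.const_mul c).indicator measurableSet_closedBall).aestronglyMeasurable
  · rw [hasFiniteIntegral_iff_ofReal (ae_of_all _ fun y =>
      Set.indicator_nonneg (fun y _ => by positivity) y)]
    have hrw : ∀ y, ENNReal.ofReal ((closedBall x0 r).indicator (fun y => c * |f y|) y) =
        (closedBall x0 r).indicator (fun y => ENNReal.ofReal (c * |f y|)) y := fun y => by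
      by_cases hy : y ∈ closedBall x0 r <;> simp [hy]
    simp_rw [hrw]
    rw [lintegral_indicator measurableSet_closedBall]
    have H := hold2 (μ := volume.restrict (closedBall x0 r))
      (a := fun _ => c) (b := fun y => |f y|) aemeasurable_const hf.abs.aemeasurable
      (fun _ => hc) (fun _ => abs_nonneg _)
    apply lt_of_le_of_lt H
    apply ENNReal.mul_lt_top
    · apply ENNReal.rpow_lt_top_of_nonneg (by norm_num)
      rw [setLIntegral_const]
      exact (ENNReal.mul_lt_top ENNReal.ofReal_lt_top measure_closedBall_lt_top).ne
    · apply ENNReal.rpow_lt_top_of_nonneg (by norm_num)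
      have e1 : ∫⁻ y in closedBall x0 r, ENNReal.ofReal (|f y| ^ 2) =
          ∫⁻ y in closedBall x0 r, ENNReal.ofReal (f y ^ 2) :=
        lintegral_congr fun y => by rw [sq_abs]
      exact (lt_of_le_of_lt (le_trans (le_of_eq e1)
        (setLIntegral_le_lintegral _ _)) hF2).ne

lemma int_of_fin {g f : E2 → ℝ} (hg : Measurable g) (hg0 : ∀ y, 0 ≤ g y) (hf : Measurable f)
    (hfin : ∫⁻ y, ENNReal.ofReal (g y * |f y|) < ⊤) : Integrable (fun y => g y * f y) := by
  constructor
  · exact (hg.mul hf).aestronglyMeasurable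
  · rw [hasFiniteIntegral_iff_norm]
    have : ∀ y, ENNReal.ofReal ‖g y * f y‖ = ENNReal.ofReal (g y * |f y|) := fun y => by
      rw [Real.norm_eq_abs, abs_mul, abs_of_nonneg (hg0 y)]
    simp_rw [this]
    exact hfin

/- The logarithmic potential of `f ∈ 𝓗_s` (s > 1) is well defined (the integral converges
absolutely at each point) and continuous on `ℝ²`. -/
theorem stmt8 (s : ℝ) (hs : 1 < s) (f : EuclideanSpace ℝ (Fin 2) → ℝ)
    (hf : Measurable f)
    (hf2 : ∫⁻ y, ENNReal.ofReal ((1 + ‖y‖ ^ 2) ^ s * f y ^ 2) < ⊤) :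
    (∀ x : EuclideanSpace ℝ (Fin 2),
      ∫⁻ y, ENNReal.ofReal (|Real.log ‖x - y‖| * |f y|) < ⊤) ∧
    Continuous (fun x : EuclideanSpace ℝ (Fin 2) => ∫ y, Real.log (1 / ‖x - y‖) * f y) := by
  have hs0 : (0:ℝ) < s := lt_trans one_pos hs
  have he : (0:ℝ) < (s - 1) / 2 := by linarith
  have he2 : (s - 1) / 2 / 2 = (s - 1) / 4 := by ring
  have hF2 : ∫⁻ y : E2, ENNReal.ofReal (f y ^ 2) < ⊤ := by
    refine lt_of_le_of_lt (lintegral_mono fun y => ENNReal.ofReal_le_ofReal ?_) hf2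
    have h1 : (1:ℝ) ≤ (1 + ‖y‖ ^ 2) ^ s := by
      calc (1:ℝ) = 1 ^ s := (Real.one_rpow s).symm
        _ ≤ (1 + ‖y‖ ^ 2) ^ s :=
            Real.rpow_le_rpow zero_le_one (by nlinarith [sq_nonneg ‖y‖]) hs0.le
    nlinarith [sq_nonneg (f y)]
  have mk1 : ∀ x : E2, Measurable fun y : E2 => k1 (x - y) := fun x =>
    k1_meas.comp (measurable_const.sub measurable_id)
  have mk2 : ∀ x : E2, Measurable fun y : E2 => k2 (x - y) := fun x =>
    k2_cont.measurable.comp (measurable_const.sub measurable_id)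
  have mk1n : ∀ (n : ℕ) (x : E2), Measurable fun y : E2 => k1n n (x - y) := fun n x =>
    (k1n_cont n).measurable.comp (measurable_const.sub measurable_id)
  have h1fin : ∀ x : E2, ∫⁻ y, ENNReal.ofReal (k1 (x - y) * |f y|) < ⊤ := by
    intro x
    refine lt_of_le_of_lt (CS_kernel hf k1_meas k1_nonneg k1_comm x) ?_
    exact ENNReal.mul_lt_top (ENNReal.rpow_lt_top_of_nonneg (by norm_num) I1.ne)
      (ENNReal.rpow_lt_top_of_nonneg (by norm_num) hF2.ne)
  have h2bound : ∀ x0 : E2, ∀ x ∈ closedBall x0 1, ∀ y : E2, k2 (x - y) ≤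
      (((s-1)/2)⁻¹ * (2 * (2 + ‖x0‖)) ^ ((s-1)/2)) * (1 + ‖y‖ ^ 2) ^ ((s-1)/4) := by
    intro x0 x hx y
    have := k2_dom x0 he hx y
    rwa [he2] at this
  have h2fin : ∀ x : E2, ∫⁻ y, ENNReal.ofReal (k2 (x - y) * |f y|) < ⊤ := by
    intro x
    refine lt_of_le_of_lt (lintegral_mono fun y => ENNReal.ofReal_le_ofReal ?_)
      (wfin hs hf hf2 (((s-1)/2)⁻¹ * (2 * (2 + ‖x‖)) ^ ((s-1)/2)) (by positivity))
    exact mul_le_mul_of_nonneg_right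
      (h2bound x x (mem_closedBall_self zero_le_one) y) (abs_nonneg _)
  constructor
  · intro x
    have key : ∀ y : E2, |Real.log ‖x - y‖| * |f y| =
        k1 (x - y) * |f y| + k2 (x - y) * |f y| := fun y => by rw [abs_log_eq]; ring
    calc ∫⁻ y, ENNReal.ofReal (|Real.log ‖x - y‖| * |f y|)
        = ∫⁻ y, (ENNReal.ofReal (k1 (x - y) * |f y|) +
            ENNReal.ofReal (k2 (x - y) * |f y|)) := by
          refine lintegral_congr fun y => ?_
          rw [key y, ENNReal.ofReal_add (mul_nonneg (k1_nonneg _) (abs_nonneg _))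
            (mul_nonneg (k2_nonneg _) (abs_nonneg _))]
      _ = (∫⁻ y, ENNReal.ofReal (k1 (x - y) * |f y|)) +
          ∫⁻ y, ENNReal.ofReal (k2 (x - y) * |f y|) :=
          lintegral_add_left ((mk1 x).mul hf.abs).ennreal_ofReal _
      _ < ⊤ := ENNReal.add_lt_top.2 ⟨h1fin x, h2fin x⟩
  · -- Continuity
    have intk1 : ∀ x : E2, Integrable (fun y => k1 (x - y) * f y) := fun x =>
      int_of_fin (mk1 x) (fun y => k1_nonneg _) hf (h1fin x)
    have intk2 : ∀ x : E2, Integrable (fun y => k2 (x - y) * f y) := fun x =>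
      int_of_fin (mk2 x) (fun y => k2_nonneg _) hf (h2fin x)
    have intk1n : ∀ (n : ℕ) (x : E2), Integrable (fun y => k1n n (x - y) * f y) := by
      intro n x
      apply (ind_int hf hF2 n (Nat.cast_nonneg n) x 1).mono'
        ((mk1n n x).mul hf).aestronglyMeasurable
      apply ae_of_all
      intro y
      by_cases hy : y ∈ closedBall x 1
      · rw [Set.indicator_of_mem hy, Real.norm_eq_abs, Pi.mul_apply, abs_mul]
        exact mul_le_mul_of_nonneg_right
          (by rw [abs_of_nonneg (k1n_nonneg n _)]; exact k1n_le n _) (abs_nonneg _)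
      · rw [Set.indicator_of_notMem hy]
        have h1 : (1:ℝ) ≤ ‖x - y‖ := by
          have h2 : 1 < dist y x := by simpa [mem_closedBall] using hy
          rw [dist_comm, dist_eq_norm] at h2
          linarith
        rw [Pi.mul_apply, k1n_eq_zero n h1]
        simp
    have hrepr : (fun x : E2 => ∫ y, Real.log (1 / ‖x - y‖) * f y) =
        fun x : E2 => (∫ y, k1 (x - y) * f y) - ∫ y, k2 (x - y) * f y := by
      funext x
      rw [← integral_sub (intk1 x) (intk2 x)]
      congr 1
      funext y
      rw [k1_sub_k2]
      ring
    rw [hrepr]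
    apply Continuous.sub
    · -- the near-singularity part, via uniform approximation
      have contPn : ∀ n : ℕ, Continuous fun x : E2 => ∫ y, k1n n (x - y) * f y := by
        intro n
        rw [continuous_iff_continuousAt]
        intro x0
        apply tendsto_integral_filter_of_dominated_convergence
          (bound := (closedBall x0 2).indicator (fun y => (n:ℝ) * |f y|))
        · exact Eventually.of_forall fun x => ((mk1n n x).mul hf).aestronglyMeasurable
        · filter_upwards [closedBall_mem_nhds x0 one_pos] with x hx
          apply ae_of_all
          intro y
          by_cases hy : y ∈ closedBall x0 2
          · rw [Set.indicator_of_mem hy, Real.norm_eq_abs, abs_mul]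
            exact mul_le_mul_of_nonneg_right
              (by rw [abs_of_nonneg (k1n_nonneg n _)]; exact k1n_le n _) (abs_nonneg _)
          · rw [Set.indicator_of_notMem hy]
            have h1 : (1:ℝ) ≤ ‖x - y‖ := by
              have h2 : 2 < dist y x0 := by simpa [mem_closedBall] using hy
              have h3 : dist y x0 ≤ dist y x + dist x x0 := dist_triangle _ _ _
              have h4 : dist x x0 ≤ 1 := by simpa [mem_closedBall] using hx
              have h5 : 1 < dist y x := by linarith
              rw [dist_comm, dist_eq_norm] at h5
              linarith
            rw [k1n_eq_zero n h1]
            simp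
        · exact ind_int hf hF2 n (Nat.cast_nonneg n) x0 2
        · apply ae_of_all
          intro y
          exact ((((k1n_cont n).comp (continuous_id.sub continuous_const)).mul
            continuous_const).tendsto x0)
      have hDfin : ∀ n : ℕ, ∫⁻ t : E2, ENNReal.ofReal ((k1 t - k1n n t) ^ 2) < ⊤ := by
        intro n
        refine lt_of_le_of_lt (lintegral_mono_ae ?_) I1
        filter_upwards [ae_ne_zero] with t ht
        apply ENNReal.ofReal_le_ofReal
        have he' := k1n_eq n ht
        have h1 := k1n_nonneg n t
        have h2 : k1n n t ≤ k1 t := by rw [he']; exact min_le_left _ _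
        nlinarith [k1_nonneg t]
      have hdist : ∀ (n : ℕ) (x : E2),
          dist (∫ y, k1 (x - y) * f y) (∫ y, k1n n (x - y) * f y) ≤
            ((∫⁻ t : E2, ENNReal.ofReal ((k1 t - k1n n t) ^ 2)) ^ ((1:ℝ)/2) *
              (∫⁻ y : E2, ENNReal.ofReal (f y ^ 2)) ^ ((1:ℝ)/2)).toReal := by
        intro n x
        rw [dist_eq_norm, ← integral_sub (intk1 x) (intk1n n x)]
        have hpt : (fun y => k1 (x - y) * f y - k1n n (x - y) * f y) =
            fun y => (k1 (x - y) - k1n n (x - y)) * f y := by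
          funext y; ring
        rw [hpt]
        refine le_trans (norm_integral_le_lintegral_norm _) ?_
        have hCS := CS_kernel hf (g := fun t => |k1 t - k1n n t|)
          (k1_meas.sub (k1n_cont n).measurable).abs (fun t => abs_nonneg _)
          (fun a b => by
            show |k1 (a - b) - k1n n (a - b)| = |k1 (b - a) - k1n n (b - a)|
            rw [k1_comm, k1n_comm]) x
        have h4 : ∫⁻ t : E2, ENNReal.ofReal (|k1 t - k1n n t| ^ 2) =
            ∫⁻ t : E2, ENNReal.ofReal ((k1 t - k1n n t) ^ 2) :=
          lintegral_congr fun t => by rw [sq_abs]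
        rw [h4] at hCS
        apply ENNReal.toReal_mono
        · exact (ENNReal.mul_lt_top
            (ENNReal.rpow_lt_top_of_nonneg (by norm_num) (hDfin n).ne)
            (ENNReal.rpow_lt_top_of_nonneg (by norm_num) hF2.ne)).ne
        · calc ∫⁻ y, ENNReal.ofReal ‖(k1 (x - y) - k1n n (x - y)) * f y‖
              = ∫⁻ y, ENNReal.ofReal (|k1 (x - y) - k1n n (x - y)| * |f y|) :=
                lintegral_congr fun y => by rw [Real.norm_eq_abs, abs_mul]
            _ ≤ _ := hCS
      have hdelta : Tendsto (fun n : ℕ =>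
          ((∫⁻ t : E2, ENNReal.ofReal ((k1 t - k1n n t) ^ 2)) ^ ((1:ℝ)/2) *
            (∫⁻ y : E2, ENNReal.ofReal (f y ^ 2)) ^ ((1:ℝ)/2)).toReal) atTop (𝓝 0) := by
        have t1 : Tendsto (fun n : ℕ =>
            (∫⁻ t : E2, ENNReal.ofReal ((k1 t - k1n n t) ^ 2)) ^ ((1:ℝ)/2)) atTop (𝓝 0) := by
          have hc := (ENNReal.continuous_rpow_const (y := (1:ℝ)/2)).tendsto 0
          have h0 : (0:ℝ≥0∞) ^ ((1:ℝ)/2) = 0 := by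
            rw [ENNReal.zero_rpow_of_pos]; norm_num
          rw [h0] at hc
          exact hc.comp Dtend
        have t2 : Tendsto (fun n : ℕ =>
            (∫⁻ t : E2, ENNReal.ofReal ((k1 t - k1n n t) ^ 2)) ^ ((1:ℝ)/2) *
              (∫⁻ y : E2, ENNReal.ofReal (f y ^ 2)) ^ ((1:ℝ)/2)) atTop (𝓝 0) := by
          have hb : ((∫⁻ y : E2, ENNReal.ofReal (f y ^ 2)) ^ ((1:ℝ)/2)) ≠ ⊤ :=
            (ENNReal.rpow_lt_top_of_nonneg (by norm_num) hF2.ne).ne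
          have h := ENNReal.Tendsto.mul_const t1 (Or.inr hb)
          rwa [zero_mul] at h
        have t3 := (ENNReal.tendsto_toReal (by simp : (0:ℝ≥0∞) ≠ ⊤)).comp t2
        simp only [ENNReal.toReal_zero] at t3
        exact t3
      have hunif : TendstoUniformly (fun (n : ℕ) (x : E2) => ∫ y, k1n n (x - y) * f y)
          (fun x : E2 => ∫ y, k1 (x - y) * f y) atTop := by
        rw [Metric.tendstoUniformly_iff]
        intro eps heps
        filter_upwards [hdelta.eventually (gt_mem_nhds heps)] with n hn x
        exact lt_of_le_of_lt (hdist n x) hn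
      exact hunif.continuous (Eventually.of_forall contPn).frequently
    · -- the far part, by dominated convergence
      rw [continuous_iff_continuousAt]
      intro x0
      apply tendsto_integral_filter_of_dominated_convergence
        (bound := fun y => (((s-1)/2)⁻¹ * (2 * (2 + ‖x0‖)) ^ ((s-1)/2)) *
          (1 + ‖y‖ ^ 2) ^ ((s-1)/4) * |f y|)
      · exact Eventually.of_forall fun x => ((mk2 x).mul hf).aestronglyMeasurable
      · filter_upwards [closedBall_mem_nhds x0 one_pos] with x hx
        apply ae_of_all
        intro y
        rw [Real.norm_eq_abs, abs_mul, abs_of_nonneg (k2_nonneg _)]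
        exact mul_le_mul_of_nonneg_right (h2bound x0 x hx y) (abs_nonneg _)
      · constructor
        · apply Measurable.aestronglyMeasurable
          fun_prop
        · rw [hasFiniteIntegral_iff_ofReal (ae_of_all _ fun y => by positivity)]
          exact wfin hs hf hf2 _ (by positivity)
      · apply ae_of_all
        intro y
        exact (((k2_cont.comp (continuous_id.sub continuous_const)).mul
          continuous_const).tendsto x0)
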